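/- Let d be an odd positive integer and χ : ℤ → ℂ a Dirichlet character of conductor d. Define the generalized degenerate Euler polynomials 𝓔_{n,λ,χ}(x) by the formal power series identity ((1+λt)^{d/λ} + 1) · ∑_{n≥0} 𝓔_{n,λ,χ}(x) t^n/n! = 2 (∑_{a=0}^{d−1} (−1)^a χ(a) (1+λt)^{a/λ}) · (1+λt)^{x/λ}, where (1+λt)^{y/λ} := ∑_{n≥0}(y|λ)_n t^n/n!. Then for every odd natural number m and every k ≥ 0, 𝓔_{k,λ,χ}(md) + 𝓔_{k,λ,χ}(0) = 2 ∑_{l=0}^{md−1} (−1)^l χ(l) (l|λ)_k. -/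

import Mathlib

open scoped Nat

/-- The degenerate falling factorial `(x|λ)_n = x(x−λ)⋯(x−(n−1)λ)`. -/
noncomputable def degFall {R : Type*} [CommRing R] (x lam : R) (n : ℕ) : R :=
  ∏ j ∈ Finset.range n, (x - (j : R) * lam)

/-- `(1+λt)^{y/λ} := ∑_{n≥0} (y|λ)_n tⁿ/n!` as a formal power series. -/
noncomputable def degSeries {R : Type*} [CommRing R] [Algebra ℚ R] (y lam : R) :
    PowerSeries R :=
  PowerSeries.mk fun n => (n ! : ℚ)⁻¹ • degFall y lam n

/-- The generating identity defining the generalized degenerate Euler polynomials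
`𝓔_{n,λ,χ}(x)` attached to χ, with parameter `mu`:
`((1+μt)^{d/μ}+1)·∑ 𝓔_{n,μ,χ}(x) tⁿ/n! = 2(∑_{a<d}(−1)^a χ(a)(1+μt)^{a/μ})(1+μt)^{x/μ}`. -/
noncomputable def genDegEulerRel (d : ℕ) (χ : DirichletCharacter ℂ d) (mu : ℂ)
    (E : ℕ → Polynomial ℂ) : Prop :=
  (degSeries (Polynomial.C (d : ℂ)) (Polynomial.C mu) + 1) *
      PowerSeries.mk (fun n => (n ! : ℂ)⁻¹ • E n)
    = 2 * ((∑ a ∈ Finset.range d,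
        ((-1 : ℂ) ^ a * χ (a : ZMod d)) • degSeries (Polynomial.C (a : ℂ)) (Polynomial.C mu)) *
        degSeries Polynomial.X (Polynomial.C mu))

lemma degFall_succ {R : Type*} [CommRing R] (x lam : R) (n : ℕ) :
    degFall x lam (n+1) = degFall x lam n * (x - n*lam) := Finset.prod_range_succ _ _

lemma degFall_add (y z lam : ℂ) (n : ℕ) :
    degFall (y + z) lam n
      = ∑ k ∈ Finset.range (n+1), (n.choose k : ℂ) * (degFall y lam k * degFall z lam (n-k)) := by
  induction n with
  | zero => simp [degFall]
  | succ n ih =>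
    rw [degFall_succ, ih, Finset.sum_mul]
    have key : ∀ k ∈ Finset.range (n+1),
        (n.choose k : ℂ) * (degFall y lam k * degFall z lam (n-k)) * (y + z - n*lam)
          = (n.choose k : ℂ) * (degFall y lam (k+1) * degFall z lam (n-k))
            + (n.choose k : ℂ) * (degFall y lam k * degFall z lam (n-k+1)) := by
      intro k hk
      rw [Finset.mem_range, Nat.lt_succ_iff] at hk
      have hcast : ((n - k : ℕ) : ℂ) = (n : ℂ) - k := by
        rw [Nat.cast_sub hk]
      rw [degFall_succ y lam k, degFall_succ z lam (n-k), hcast]; ring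
    rw [Finset.sum_congr rfl key, Finset.sum_add_distrib]
    rw [Finset.sum_range_succ' (fun k => ((n+1).choose k : ℂ) * (degFall y lam k * degFall z lam (n+1-k))) (n+1)]
    have h2 : ∀ k ∈ Finset.range (n+1),
        ((n+1).choose (k+1) : ℂ) * (degFall y lam (k+1) * degFall z lam (n+1-(k+1)))
          = (n.choose k : ℂ) * (degFall y lam (k+1) * degFall z lam (n-k))
            + (n.choose (k+1) : ℂ) * (degFall y lam (k+1) * degFall z lam (n-k)) := by
      intro k hk
      rw [Nat.succ_sub_succ, Nat.choose_succ_succ]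
      push_cast
      ring
    rw [Finset.sum_congr rfl h2, Finset.sum_add_distrib]
    have h3 : ∑ k ∈ Finset.range (n+1), (n.choose k : ℂ) * (degFall y lam k * degFall z lam (n-k+1))
        = ∑ k ∈ Finset.range (n+1), (n.choose (k+1) : ℂ) * (degFall y lam (k+1) * degFall z lam (n-k))
          + (1 : ℂ) * (degFall y lam 0 * degFall z lam (n+1)) := by
      rw [Finset.sum_range_succ' (fun k => (n.choose k : ℂ) * (degFall y lam k * degFall z lam (n-k+1))) n,
        Finset.sum_range_succ (fun k => (n.choose (k+1) : ℂ) * (degFall y lam (k+1) * degFall z lam (n-k)))]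
      simp only [Nat.choose_succ_self, Nat.cast_zero, zero_mul, add_zero, Nat.choose_zero_right,
        Nat.cast_one, Nat.sub_zero]
      congr 1
      refine Finset.sum_congr rfl fun k hk => ?_
      rw [Finset.mem_range] at hk
      have : n - (k+1) + 1 = n - k := by omega
      rw [this]
    rw [h3]
    simp [Nat.choose_zero_right]
    ring

lemma degSeries_mul (y z lam : ℂ) :
    degSeries y lam * degSeries z lam = degSeries (y + z) lam := by
  ext n
  rw [PowerSeries.coeff_mul]
  simp only [degSeries, PowerSeries.coeff_mk]
  rw [Finset.Nat.sum_antidiagonal_eq_sum_range_succ_mk, degFall_add, Finset.smul_sum]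
  refine Finset.sum_congr rfl fun k hk => ?_
  rw [Finset.mem_range, Nat.lt_succ_iff] at hk
  have hc : (n.choose k : ℂ) * ((k ! : ℂ) * ((n-k)! : ℂ)) = (n ! : ℂ) := by
    have h := Nat.choose_mul_factorial_mul_factorial hk
    push_cast [← h]; ring
  have h1 : ∀ (q : ℚ) (c : ℂ), q • c = (q : ℂ) * c := fun q c => Rat.smul_def q c
  rw [h1, h1, h1]
  push_cast
  have hk0 : (k ! : ℂ) ≠ 0 := by exact_mod_cast Nat.factorial_ne_zero k
  have hk1 : ((n-k)! : ℂ) ≠ 0 := by exact_mod_cast Nat.factorial_ne_zero (n-k)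
  have hn0 : (n ! : ℂ) ≠ 0 := by exact_mod_cast Nat.factorial_ne_zero n
  field_simp
  linear_combination (-(degFall y lam k * degFall z lam (n-k))) * hc

lemma degSeries_zero (lam : ℂ) : degSeries (0:ℂ) lam = 1 := by
  ext n
  simp only [degSeries, PowerSeries.coeff_mk, PowerSeries.coeff_one]
  cases n with
  | zero => simp [degFall]
  | succ n =>
    have : degFall (0:ℂ) lam (n+1) = 0 := by
      simp [degFall, Finset.prod_range_succ']
    simp [this]

lemma constantCoeff_degSeries (y lam : ℂ) :
    PowerSeries.constantCoeff (R := ℂ) (degSeries y lam) = 1 := by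
  simp [degSeries, ← PowerSeries.coeff_zero_eq_constantCoeff, degFall]

lemma degFall_map (ev : Polynomial ℂ →+* ℂ) (x l : Polynomial ℂ) (n : ℕ) :
    ev (degFall x l n) = degFall (ev x) (ev l) n := by
  unfold degFall
  rw [map_prod]
  simp

lemma map_degSeries (c : ℂ) (y l : Polynomial ℂ) :
    PowerSeries.map (Polynomial.evalRingHom c) (degSeries y l)
      = degSeries (y.eval c) (l.eval c) := by
  ext n
  simp only [PowerSeries.coeff_map, degSeries, PowerSeries.coeff_mk]
  rw [show ((Polynomial.evalRingHom c) ((n ! : ℚ)⁻¹ • degFall y l n))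
      = Polynomial.eval c ((n ! : ℚ)⁻¹ • degFall y l n) from rfl,
    Polynomial.eval_smul]
  congr 1
  exact degFall_map (Polynomial.evalRingHom c) y l n

lemma map_mkE (c : ℂ) (E : ℕ → Polynomial ℂ) :
    PowerSeries.map (Polynomial.evalRingHom c)
        (PowerSeries.mk fun n => (n ! : ℂ)⁻¹ • E n)
      = PowerSeries.mk fun n => (n ! : ℂ)⁻¹ • (E n).eval c := by
  ext n
  simp only [PowerSeries.coeff_map, PowerSeries.coeff_mk]
  rw [show ((Polynomial.evalRingHom c) ((n ! : ℂ)⁻¹ • E n))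
      = Polynomial.eval c ((n ! : ℂ)⁻¹ • E n) from rfl, Polynomial.eval_smul]

lemma map_smul_ps (c : ℂ) (z : ℂ) (f : PowerSeries (Polynomial ℂ)) :
    PowerSeries.map (Polynomial.evalRingHom c) (z • f)
      = z • PowerSeries.map (Polynomial.evalRingHom c) f := by
  ext n
  simp only [PowerSeries.coeff_map, PowerSeries.coeff_smul]
  rw [show ((Polynomial.evalRingHom c) (z • (PowerSeries.coeff n) f))
      = Polynomial.eval c (z • (PowerSeries.coeff n) f) from rfl, Polynomial.eval_smul]
  rfl

set_option maxHeartbeats 2000000 in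
/-- for odd d, χ of conductor d, odd m and k ≥ 0,
`𝓔_{k,λ,χ}(md) + 𝓔_{k,λ,χ}(0) = 2 ∑_{l=0}^{md−1} (−1)^l χ(l) (l|λ)_k`. -/
theorem genDegEuler_boundary (d : ℕ) (hd0 : 0 < d) (hd : Odd d)
    (χ : DirichletCharacter ℂ d) (hχ : χ.conductor = d) (lam : ℂ)
    (E : ℕ → Polynomial ℂ) (hE : genDegEulerRel d χ lam E)
    (m : ℕ) (hm : Odd m) (k : ℕ) :
    (E k).eval ((m * d : ℕ) : ℂ) + (E k).eval 0
      = 2 * ∑ l ∈ Finset.range (m * d),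
          (-1 : ℂ) ^ l * χ (l : ZMod d) * degFall (l : ℂ) lam k := by
  classical
  unfold genDegEulerRel at hE
  set A : PowerSeries ℂ := ∑ a ∈ Finset.range d,
      ((-1 : ℂ) ^ a * χ (a : ZMod d)) • degSeries (a : ℂ) lam with hA
  have hmap : ∀ c : ℂ,
      (degSeries (d : ℂ) lam + 1) * PowerSeries.mk (fun n => (n ! : ℂ)⁻¹ • (E n).eval c)
        = 2 * (A * degSeries c lam) := by
    intro c
    have h := congrArg (PowerSeries.map (Polynomial.evalRingHom c)) hE
    rw [map_mul, map_add, map_one, map_mul, map_ofNat, map_mul, map_sum] at h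
    rw [map_degSeries, map_mkE] at h
    simp only [map_smul_ps, map_degSeries, Polynomial.eval_C, Polynomial.eval_X] at h
    exact h
  -- telescoping sum
  set v : ℕ → PowerSeries ℂ :=
    fun i => ((-1 : ℂ) ^ (i+1)) • degSeries ((i * d : ℕ) : ℂ) lam with hv
  set T : PowerSeries ℂ := ∑ i ∈ Finset.range m,
      ((-1 : ℂ) ^ i) • degSeries ((i * d : ℕ) : ℂ) lam with hT
  have htel : (degSeries (d : ℂ) lam + 1) * T
      = degSeries ((m * d : ℕ) : ℂ) lam + 1 := by
    have hterm : ∀ i ∈ Finset.range m,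
        (degSeries (d : ℂ) lam + 1) * (((-1 : ℂ) ^ i) • degSeries ((i * d : ℕ) : ℂ) lam)
          = v (i+1) - v i := by
      intro i _
      have hmul : degSeries (d : ℂ) lam * degSeries ((i * d : ℕ) : ℂ) lam
          = degSeries (((i+1) * d : ℕ) : ℂ) lam := by
        rw [degSeries_mul]
        congr 1
        push_cast; ring
      have hv1 : v (i+1) = ((-1 : ℂ) ^ i) • degSeries (((i+1) * d : ℕ) : ℂ) lam := by
        rw [hv]; simp only [pow_succ, pow_succ]
        rw [mul_neg_one, mul_neg_one, neg_neg]
      have hv2 : v i = -(((-1 : ℂ) ^ i) • degSeries ((i * d : ℕ) : ℂ) lam) := by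
        rw [hv]; simp only [pow_succ]
        rw [mul_neg_one, neg_smul]
      rw [hv1, hv2, sub_neg_eq_add, mul_smul_comm, add_mul, one_mul, hmul, smul_add]
    calc (degSeries (d : ℂ) lam + 1) * T
        = ∑ i ∈ Finset.range m, (v (i+1) - v i) := by
          rw [hT, Finset.mul_sum]; exact Finset.sum_congr rfl hterm
      _ = v m - v 0 := Finset.sum_range_sub v m
      _ = degSeries ((m * d : ℕ) : ℂ) lam + 1 := by
          rw [hv]
          simp only [zero_mul, Nat.cast_zero, degSeries_zero, pow_one]
          have h1 : ((-1 : ℂ) ^ (m+1)) = 1 := by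
            have : Even (m+1) := hm.add_one
            exact this.neg_one_pow
          rw [h1, one_smul]
          norm_num
  -- A * T = G
  set G : PowerSeries ℂ := ∑ l ∈ Finset.range (m * d),
      ((-1 : ℂ) ^ l * χ (l : ZMod d)) • degSeries ((l : ℕ) : ℂ) lam with hG
  have hAT : A * T = G := by
    rw [hA, hT, Finset.sum_mul_sum, hG, ← Finset.sum_product']
    refine Finset.sum_nbij' (fun p => p.2 * d + p.1) (fun l => (l % d, l / d)) ?_ ?_ ?_ ?_ ?_
    · rintro ⟨a, i⟩ hp
      simp only [Finset.mem_product, Finset.mem_range] at hp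
      obtain ⟨ha, hi⟩ := hp
      rw [Finset.mem_range]
      calc i * d + a < i * d + d := by omega
        _ = (i+1) * d := by ring
        _ ≤ m * d := Nat.mul_le_mul_right d hi
    · intro l hl
      rw [Finset.mem_range] at hl
      simp only [Finset.mem_product, Finset.mem_range]
      exact ⟨Nat.mod_lt _ hd0, (Nat.div_lt_iff_lt_mul hd0).mpr hl⟩
    · rintro ⟨a, i⟩ hp
      simp only [Finset.mem_product, Finset.mem_range] at hp
      obtain ⟨ha, hi⟩ := hp
      have h1 : (i * d + a) % d = a := by
        rw [add_comm, Nat.add_mul_mod_self_right]; exact Nat.mod_eq_of_lt ha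
      have h2 : (i * d + a) / d = i := by
        rw [add_comm, Nat.add_mul_div_right _ _ hd0, Nat.div_eq_of_lt ha, zero_add]
      simp [h1, h2]
    · intro l hl
      simp only
      rw [mul_comm]
      exact Nat.div_add_mod l d
    · rintro ⟨a, i⟩ hp
      simp only [Finset.mem_product, Finset.mem_range] at hp
      obtain ⟨ha, hi⟩ := hp
      simp only
      rw [smul_mul_smul_comm, degSeries_mul]
      have hcast : ((i * d + a : ℕ) : ℂ) = (a : ℂ) + ((i * d : ℕ) : ℂ) := by push_cast; ring
      have hχ2 : ((i * d + a : ℕ) : ZMod d) = (a : ZMod d) := by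
        push_cast [ZMod.natCast_self]; ring
      have hsgn : (-1 : ℂ) ^ (i * d + a) = (-1 : ℂ) ^ a * (-1 : ℂ) ^ i := by
        rw [pow_add, mul_comm i d, pow_mul, hd.neg_one_pow]; ring
      rw [hcast, hχ2, hsgn]
      congr 1
      ring
  -- cancel (degSeries d + 1)
  have hkey : PowerSeries.mk (fun n => (n ! : ℂ)⁻¹ • (E n).eval ((m * d : ℕ) : ℂ))
      + PowerSeries.mk (fun n => (n ! : ℂ)⁻¹ • (E n).eval 0) = 2 * G := by
    have hne : (degSeries (d : ℂ) lam + 1) ≠ 0 := by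
      intro h0
      have h1 := congrArg (PowerSeries.constantCoeff (R := ℂ)) h0
      rw [map_add, map_one, constantCoeff_degSeries] at h1
      norm_num at h1
    apply mul_left_cancel₀ hne
    rw [mul_add, hmap ((m * d : ℕ) : ℂ), hmap 0, degSeries_zero, mul_one]
    rw [← hAT]
    have hr : (degSeries (d : ℂ) lam + 1) * (2 * (A * T))
        = 2 * (A * ((degSeries (d : ℂ) lam + 1) * T)) := by ring
    rw [hr, htel]
    ring
  -- extract coefficient k
  have hco := congrArg (PowerSeries.coeff (R := ℂ) k) hkey
  have h2G : PowerSeries.coeff (R := ℂ) k (2 * G) = 2 * PowerSeries.coeff (R := ℂ) k G := by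
    rw [← map_ofNat (PowerSeries.C (R := ℂ)) 2, PowerSeries.coeff_C_mul]
  rw [map_add, PowerSeries.coeff_mk, PowerSeries.coeff_mk, h2G, hG, map_sum] at hco
  simp only [PowerSeries.coeff_smul, degSeries, PowerSeries.coeff_mk] at hco
  have hk0 : (k ! : ℂ) ≠ 0 := by exact_mod_cast Nat.factorial_ne_zero k
  have hq : ∀ (c : ℂ), (k ! : ℚ)⁻¹ • c = (k ! : ℂ)⁻¹ * c := by
    intro c
    rw [Rat.smul_def]
    push_cast
    ring
  simp only [hq, smul_eq_mul] at hco
  have hsum : ∑ l ∈ Finset.range (m * d),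
      (-1 : ℂ) ^ l * χ (l : ZMod d) * ((k ! : ℂ)⁻¹ * degFall (l : ℂ) lam k)
        = (k ! : ℂ)⁻¹ * ∑ l ∈ Finset.range (m * d),
            (-1 : ℂ) ^ l * χ (l : ZMod d) * degFall (l : ℂ) lam k := by
    rw [Finset.mul_sum]
    exact Finset.sum_congr rfl fun l _ => by ring
  rw [hsum] at hco
  field_simp at hco
  push_cast
  push_cast at hco
  linear_combination hco
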